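/- Let K be a positive integer, let λ : Fin K → ℝ and q : Fin K → ℝ be nonnegative, and let S > 0 satisfy ∑ i, q i = S. Then ∑ i, log₂(1 + q i · λ i) ≤ ∑ i, log₂(1 + (S/K) · λ i) + K. In words: for a MIMO channel with singular values √(λ i), any power allocation with total power S achieves at most K bits more than the equal power allocation S/K per eigen-direction. -/

import Mathlib

/-- Any power allocation with total power `S` on a MIMO channel with
eigenvalues `λ i` achieves at most `K` bits more than the equal power
allocation `S/K` per eigen-direction. -/
theorem waterfilling_vs_equal_power (K : ℕ) (hK : 0 < K)
    (lam q : Fin K → ℝ) (hlam : ∀ i, 0 ≤ lam i) (hq : ∀ i, 0 ≤ q i)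
    (S : ℝ) (hS : 0 < S) (hsum : ∑ i, q i = S) :
    ∑ i, Real.logb 2 (1 + q i * lam i) ≤
      (∑ i, Real.logb 2 (1 + (S / K) * lam i)) + K := by
  have hKR : (0 : ℝ) < K := by exact_mod_cast hK
  set a : Fin K → ℝ := fun i => 1 + K * q i / S with ha
  have hapos : ∀ i, 0 < a i := fun i => by
    have hqi := hq i
    have : 0 ≤ (K:ℝ) * q i / S := by positivity
    simp only [ha]; linarith
  -- pointwise bound
  have hpt : ∀ i, Real.logb 2 (1 + q i * lam i) ≤
      Real.logb 2 (1 + (S / K) * lam i) + Real.logb 2 (a i) := by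
    intro i
    have h1 : (0:ℝ) < 1 + (S / K) * lam i := by
      have : 0 ≤ (S / K) * lam i := mul_nonneg (by positivity) (hlam i)
      linarith
    rw [← Real.logb_mul (ne_of_gt h1) (ne_of_gt (hapos i))]
    have hqi := hq i
    have hli := hlam i
    apply Real.logb_le_logb_of_le one_lt_two (by nlinarith [mul_nonneg hqi hli])
    have hmul : (1 + (S / K) * lam i) * a i =
        1 + q i * lam i + ((S / K) * lam i + K * q i / S) := by
      simp only [ha]; field_simp; ring
    have h2 : 0 ≤ (S / K) * lam i := by positivity
    have h3 : 0 ≤ (K:ℝ) * q i / S := by positivity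
    rw [hmul]; linarith
  calc ∑ i, Real.logb 2 (1 + q i * lam i)
      ≤ ∑ i, (Real.logb 2 (1 + (S / K) * lam i) + Real.logb 2 (a i)) :=
        Finset.sum_le_sum fun i _ => hpt i
    _ = (∑ i, Real.logb 2 (1 + (S / K) * lam i)) + ∑ i, Real.logb 2 (a i) :=
        Finset.sum_add_distrib
    _ ≤ (∑ i, Real.logb 2 (1 + (S / K) * lam i)) + K := by
        gcongr
        -- ∑ logb 2 (a i) ≤ K via AM-GM
        have hprod : ∏ i, a i ≤ 2 ^ K := by
          have hgm := Real.geom_mean_le_arith_mean_weighted Finset.univ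
            (fun _ : Fin K => 1 / (K:ℝ)) a (fun i _ => by positivity)
            (by simp [Finset.sum_const]; field_simp) (fun i _ => (hapos i).le)
          have hsum2 : ∑ i, (1 / (K:ℝ)) * a i = 2 := by
            have : ∑ i, (1 / (K:ℝ)) * a i
                = ∑ i, (1 / (K:ℝ) + q i / S) := by
              apply Finset.sum_congr rfl
              intro i _
              simp only [ha]
              field_simp
            rw [this, Finset.sum_add_distrib, Finset.sum_const, ← Finset.sum_div, hsum]
            field_simp
            norm_num
            rw [mul_inv_cancel₀ (ne_of_gt hKR)]; norm_num
          rw [hsum2] at hgm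
          have hpow : (∏ i, a i ^ (1 / (K:ℝ))) ^ K ≤ 2 ^ K := by
            apply pow_le_pow_left₀ (Finset.prod_nonneg fun i _ => (Real.rpow_nonneg (hapos i).le _)) hgm
          calc ∏ i, a i = (∏ i, a i ^ (1 / (K:ℝ))) ^ K := by
                rw [← Finset.prod_pow]
                congr 1; funext i
                rw [← Real.rpow_natCast (a i ^ (1/(K:ℝ))), ← Real.rpow_mul (hapos i).le]
                rw [one_div, inv_mul_cancel₀ (ne_of_gt hKR), Real.rpow_one]
            _ ≤ 2 ^ K := hpow
        have : ∑ i, Real.logb 2 (a i) = Real.logb 2 (∏ i, a i) :=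
          (Real.logb_prod _ _ fun i _ => (hapos i).ne').symm
        rw [this]
        calc Real.logb 2 (∏ i, a i) ≤ Real.logb 2 (2 ^ K) :=
              Real.logb_le_logb_of_le one_lt_two
                (Finset.prod_pos fun i _ => hapos i) hprod
          _ = K := by rw [Real.logb_pow]; simp
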